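/- Let g : [0,1] → ℝ be a continuous, non-decreasing function with g(1) > g(0). Then ∫₀¹ g(1 − t²) dt > ∫₀¹ g(t²) dt. -/
import Mathlib

open Set Real

/-- For every continuous non-decreasing `g : [0,1] → ℝ` with `g(1) > g(0)`, one has
`∫₀¹ g(1 − t²) dt > ∫₀¹ g(t²) dt`. -/
theorem integral_g_one_sub_sq_gt (g : ℝ → ℝ)
    (hcont : ContinuousOn g (Set.Icc 0 1))
    (hmono : MonotoneOn g (Set.Icc 0 1))
    (hlt : g 0 < g 1) :
    (∫ t in (0:ℝ)..1, g (t ^ 2)) < ∫ t in (0:ℝ)..1, g (1 - t ^ 2) := by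
  have hmem1 : ∀ t ∈ Icc (0:ℝ) 1, (1 - t)^2 ∈ Icc (0:ℝ) 1 := by
    intro t ht; constructor <;> nlinarith [ht.1, ht.2]
  have hmem2 : ∀ t ∈ Icc (0:ℝ) 1, 1 - t^2 ∈ Icc (0:ℝ) 1 := by
    intro t ht; constructor <;> nlinarith [ht.1, ht.2]
  have hle : ∀ t ∈ Icc (0:ℝ) 1, g ((1 - t)^2) ≤ g (1 - t^2) := by
    intro t ht
    exact hmono (hmem1 t ht) (hmem2 t ht) (by nlinarith [ht.1, ht.2])
  -- Strict inequality at some point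
  have hkey : ∃ c ∈ Icc (0:ℝ) 1, g ((1 - c)^2) < g (1 - c^2) := by
    by_contra hcon
    push_neg at hcon
    have heq : ∀ t ∈ Icc (0:ℝ) 1, g ((1 - t)^2) = g (1 - t^2) :=
      fun t ht => le_antisymm (hle t ht) (hcon t ht)
    -- g x = g (2√x − x) for x ∈ [0,1]
    have h1 : ∀ x ∈ Icc (0:ℝ) 1, g x = g (2 * Real.sqrt x - x) := by
      intro x hx
      set s := Real.sqrt x with hs
      have hs0 : 0 ≤ s := Real.sqrt_nonneg x
      have hs1 : s ≤ 1 := Real.sqrt_le_one.mpr hx.2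
      have hs2 : s ^ 2 = x := Real.sq_sqrt hx.1
      have := heq (1 - s) ⟨by linarith, by linarith⟩
      have e1 : (1 - (1 - s))^2 = x := by rw [show (1 - (1 - s)) = s by ring]; exact hs2
      have e2 : 1 - (1 - s)^2 = 2 * s - x := by nlinarith [hs2]
      rw [e1, e2] at this
      exact this
    -- g ((1 − √(1−y))²) = g y for y ∈ [0,1]
    have h2 : ∀ y ∈ Icc (0:ℝ) 1, g ((1 - Real.sqrt (1 - y))^2) = g y := by
      intro y hy
      set r := Real.sqrt (1 - y) with hr
      have hr0 : 0 ≤ r := Real.sqrt_nonneg _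
      have hr1 : r ≤ 1 := Real.sqrt_le_one.mpr (by linarith [hy.1])
      have hr2 : r ^ 2 = 1 - y := Real.sq_sqrt (by linarith [hy.2])
      have := heq r ⟨hr0, hr1⟩
      have e2 : 1 - r^2 = y := by linarith
      rw [e2] at this
      exact this
    -- g (1/2) = g 1 via sSup argument
    have ghalf1 : g (1/2 : ℝ) = g 1 := by
      set S : Set ℝ := Icc (1/2 : ℝ) 1 ∩ g ⁻¹' {g (1/2 : ℝ)} with hS
      have hSc : IsClosed S :=
        (hcont.mono (Icc_subset_Icc (by norm_num) le_rfl)).preimage_isClosed_of_isClosed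
          isClosed_Icc isClosed_singleton
      have hSne : S.Nonempty := ⟨1/2, ⟨le_rfl, by norm_num⟩, rfl⟩
      have hSbd : BddAbove S := ⟨1, fun z hz => hz.1.2⟩
      have hmem : sSup S ∈ S := hSc.csSup_mem hSne hSbd
      set s := sSup S with hsdef
      have hs_half : (1/2 : ℝ) ≤ s := hmem.1.1
      have hs_le1 : s ≤ 1 := hmem.1.2
      rcases eq_or_lt_of_le hs_le1 with h | h
      · have : g s = g (1/2 : ℝ) := hmem.2
        rw [h] at this
        exact this.symm
      · exfalso
        have hs_pos : 0 < s := by linarith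
        set q := Real.sqrt s with hq
        have hq0 : 0 < q := Real.sqrt_pos.mpr hs_pos
        have hq1 : q < 1 := by
          have := Real.sqrt_lt_sqrt (le_of_lt hs_pos) h
          rwa [Real.sqrt_one] at this
        have hq2 : q ^ 2 = s := Real.sq_sqrt (le_of_lt hs_pos)
        set u := 2 * q - s with hu
        have hsu : s < u := by nlinarith
        have hu1 : u < 1 := by nlinarith
        have hgu : g u = g (1/2 : ℝ) := by
          have := h1 s ⟨le_of_lt hs_pos, hs_le1⟩
          rw [← hq] at this
          rw [← hu] at this
          rw [← this]
          exact hmem.2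
        have huS : u ∈ S := ⟨⟨by linarith, le_of_lt hu1⟩, hgu⟩
        have : u ≤ s := le_csSup hSbd huS
        linarith
    -- g (1/2) = g 0 via sInf argument
    have ghalf0 : g (1/2 : ℝ) = g 0 := by
      set T : Set ℝ := Icc (0 : ℝ) (1/2) ∩ g ⁻¹' {g (1/2 : ℝ)} with hT
      have hTc : IsClosed T :=
        (hcont.mono (Icc_subset_Icc le_rfl (by norm_num))).preimage_isClosed_of_isClosed
          isClosed_Icc isClosed_singleton
      have hTne : T.Nonempty := ⟨1/2, ⟨by norm_num, le_rfl⟩, rfl⟩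
      have hTbd : BddBelow T := ⟨0, fun z hz => hz.1.1⟩
      have hmem : sInf T ∈ T := hTc.csInf_mem hTne hTbd
      set i := sInf T with hidef
      have hi0 : 0 ≤ i := hmem.1.1
      have hi_half : i ≤ 1/2 := hmem.1.2
      rcases eq_or_lt_of_le hi0 with h | h
      · have : g i = g (1/2 : ℝ) := hmem.2
        rw [← h] at this
        exact this.symm
      · exfalso
        set r := Real.sqrt (1 - i) with hr
        have hr0 : 0 < r := Real.sqrt_pos.mpr (by linarith)
        have hr1 : r < 1 := by
          have := Real.sqrt_lt_sqrt (by linarith : (0:ℝ) ≤ 1 - i) (by linarith : 1 - i < 1)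
          rwa [Real.sqrt_one] at this
        have hr2 : r ^ 2 = 1 - i := Real.sq_sqrt (by linarith)
        set v := (1 - r)^2 with hv
        have hv0 : 0 ≤ v := sq_nonneg _
        have hvi : v < i := by nlinarith
        have hgv : g v = g (1/2 : ℝ) := by
          have := h2 i ⟨le_of_lt h, by linarith⟩
          rw [← hr, ← hv] at this
          rw [this]
          exact hmem.2
        have hvT : v ∈ T := ⟨⟨hv0, by linarith⟩, hgv⟩
        have : i ≤ v := csInf_le hTbd hvT
        linarith
    linarith [ghalf1, ghalf0]
  -- substitution t ↦ 1 − t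
  have hsub : (∫ t in (0:ℝ)..1, g (t ^ 2)) = ∫ t in (0:ℝ)..1, g ((1 - t) ^ 2) := by
    have := intervalIntegral.integral_comp_sub_left (a := (0:ℝ)) (b := 1)
      (fun t => g (t ^ 2)) 1
    simp only [sub_zero, sub_self] at this
    exact this.symm
  rw [hsub]
  have hcont1 : ContinuousOn (fun t : ℝ => g ((1 - t)^2)) (Icc 0 1) :=
    hcont.comp (by fun_prop) hmem1
  have hcont2 : ContinuousOn (fun t : ℝ => g (1 - t^2)) (Icc 0 1) :=
    hcont.comp (by fun_prop) hmem2
  exact intervalIntegral.integral_lt_integral_of_continuousOn_of_le_of_exists_lt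
    one_pos hcont1 hcont2 (fun x hx => hle x (Ioc_subset_Icc_self hx)) hkey
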